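/- Let P be a k×l 0-1 pattern satisfying: (1) the first and last row of P each contain a 1 entry that is the only 1 entry in its column, (2) the first and last column of P each contain a 1 entry that is the only 1 entry in its row, and (3) P contains a 1 entry that is the only 1 entry in both its row and its column. Then for n > max(2k−2, 2l−2), the n×n matrix consisting of four (k−1)×(l−1) all-ones blocks in the four corners and 0 elsewhere is semisaturating for P; hence ssat(P,n,n) ≤ (2k−2)(2l−2) = O(1). -/

import Mathlib

/-- `M` contains the pattern `P`: there is an order-preserving selection of rows and
columns of `M` whose submatrix can be turned into `P` by changing `1`s to `0`s. -/
def Contains {k l m n : ℕ} (P : Fin k → Fin l → Bool) (M : Fin m → Fin n → Bool) : Prop :=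
  ∃ r : Fin k → Fin m, ∃ c : Fin l → Fin n, StrictMono r ∧ StrictMono c ∧
    ∀ i j, P i j = true → M (r i) (c j) = true

def Avoids {k l m n : ℕ} (P : Fin k → Fin l → Bool) (M : Fin m → Fin n → Bool) : Prop :=
  ¬ Contains P M

/-- The weight of a 0-1 matrix: the number of its `1` entries. -/
def weight {m n : ℕ} (M : Fin m → Fin n → Bool) : ℕ :=
  (Finset.univ.filter (fun p : Fin m × Fin n => M p.1 p.2 = true)).card

/-- The matrix obtained from `M` by changing the entry at `(p,q)` to `1`. -/
def setOne {m n : ℕ} (M : Fin m → Fin n → Bool) (p : Fin m) (q : Fin n) :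
    Fin m → Fin n → Bool :=
  fun i j => if i = p ∧ j = q then true else M i j

/-- `M` is saturating for `P`: it avoids `P` and flipping any `0` entry creates an
occurrence of `P`. -/
def Saturating {k l m n : ℕ} (P : Fin k → Fin l → Bool) (M : Fin m → Fin n → Bool) : Prop :=
  Avoids P M ∧ ∀ p q, M p q = false → Contains P (setOne M p q)

/-- `(r, c)` is an occurrence of `P` in `M`. -/
def IsOcc {k l m n : ℕ} (P : Fin k → Fin l → Bool) (M : Fin m → Fin n → Bool)
    (r : Fin k → Fin m) (c : Fin l → Fin n) : Prop :=
  StrictMono r ∧ StrictMono c ∧ ∀ i j, P i j = true → M (r i) (c j) = true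

/-- `M` is semisaturating for `P`: flipping any `0` entry creates a new occurrence of `P`. -/
def Semisaturating {k l m n : ℕ} (P : Fin k → Fin l → Bool) (M : Fin m → Fin n → Bool) : Prop :=
  ∀ p q, M p q = false → ∃ r c, IsOcc P (setOne M p q) r c ∧ ¬ IsOcc P M r c

/-- `ex(P,m,n)`: the maximum weight of an `m × n` matrix avoiding `P`. -/
noncomputable def exF {k l : ℕ} (P : Fin k → Fin l → Bool) (m n : ℕ) : ℕ :=
  sSup {w | ∃ M : Fin m → Fin n → Bool, Avoids P M ∧ weight M = w}

/-- `sat(P,m,n)`: the minimum weight of an `m × n` matrix saturating for `P`. -/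
noncomputable def satF {k l : ℕ} (P : Fin k → Fin l → Bool) (m n : ℕ) : ℕ :=
  sInf {w | ∃ M : Fin m → Fin n → Bool, Saturating P M ∧ weight M = w}

/-- `ssat(P,m,n)`: the minimum weight of an `m × n` matrix semisaturating for `P`. -/
noncomputable def ssatF {k l : ℕ} (P : Fin k → Fin l → Bool) (m n : ℕ) : ℕ :=
  sInf {w | ∃ M : Fin m → Fin n → Bool, Semisaturating P M ∧ weight M = w}

/-- Piecewise map used to build occurrences: identity below `i0`, the value `v` at `i0`,
and shifted to the bottom/right strip above `i0`. -/
def cm (k n i0 v i : ℕ) : ℕ := if i < i0 then i else if i = i0 then v else n - k + i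

lemma cm_lt {k n i0 v : ℕ} (hkn : k ≤ n) (hv : v < n) {i : ℕ} (hi : i < k) :
    cm k n i0 v i < n := by
  unfold cm; split_ifs <;> omega

lemma cm_self (k n i0 v : ℕ) : cm k n i0 v i0 = v := by unfold cm; simp

lemma cm_mono {k n i0 v : ℕ} (hn : 2 * k - 2 < n) (hi0 : i0 < k) (h1 : i0 ≤ v)
    (h2 : v ≤ n - k + i0) {i i' : ℕ} (h : i < i') (hi' : i' < k) :
    cm k n i0 v i < cm k n i0 v i' := by
  unfold cm; split_ifs <;> omega

lemma cm_corner' {k n i0 v i : ℕ} (hi0 : i0 < k) (hi : i < k)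
    (h : i ≠ i0 ∨ (v < k - 1 ∨ n - (k - 1) ≤ v)) :
    cm k n i0 v i < k - 1 ∨ n - (k - 1) ≤ cm k n i0 v i := by
  unfold cm; split_ifs <;> omega

lemma occ_aux {k l n : ℕ} (P : Fin k → Fin l → Bool) (M : Fin n → Fin n → Bool)
    (p q : Fin n) (hM : M p q = false) (i0 : Fin k) (j0 : Fin l) (hP : P i0 j0 = true)
    (r : Fin k → Fin n) (c : Fin l → Fin n) (hr : StrictMono r) (hc : StrictMono c)
    (hrp : r i0 = p) (hcq : c j0 = q)
    (hcov : ∀ i j, P i j = true → (i = i0 ∧ j = j0) ∨ M (r i) (c j) = true) :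
    IsOcc P (setOne M p q) r c ∧ ¬ IsOcc P M r c := by
  constructor
  · refine ⟨hr, hc, fun i j hij => ?_⟩
    rcases hcov i j hij with ⟨hi, hj⟩ | h
    · subst hi; subst hj; simp [setOne, hrp, hcq]
    · simp only [setOne]
      split_ifs with h'
      · rfl
      · exact h
  · rintro ⟨-, -, h⟩
    have := h i0 j0 hP
    rw [hrp, hcq, hM] at this
    exact Bool.false_ne_true this

lemma build_occ {k l n : ℕ} (hkn : 2 * k - 2 < n) (hln : 2 * l - 2 < n)
    (P : Fin k → Fin l → Bool) (M : Fin n → Fin n → Bool)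
    (hMval : ∀ i j : Fin n, M i j = true ↔
      (((i : ℕ) < k - 1 ∨ n - (k - 1) ≤ (i : ℕ)) ∧
       ((j : ℕ) < l - 1 ∨ n - (l - 1) ≤ (j : ℕ))))
    (p q : Fin n) (hM : M p q = false)
    (i0 : Fin k) (j0 : Fin l) (hP : P i0 j0 = true)
    (hp1 : (i0 : ℕ) ≤ (p : ℕ)) (hp2 : (p : ℕ) ≤ n - k + (i0 : ℕ))
    (hq1 : (j0 : ℕ) ≤ (q : ℕ)) (hq2 : (q : ℕ) ≤ n - l + (j0 : ℕ))
    (hcov : ∀ i j, P i j = true → ¬(i = i0 ∧ j = j0) →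
      ((i : ℕ) ≠ (i0 : ℕ) ∨ ((p : ℕ) < k - 1 ∨ n - (k - 1) ≤ (p : ℕ))) ∧
      ((j : ℕ) ≠ (j0 : ℕ) ∨ ((q : ℕ) < l - 1 ∨ n - (l - 1) ≤ (q : ℕ)))) :
    ∃ r c, IsOcc P (setOne M p q) r c ∧ ¬ IsOcc P M r c := by
  have hkpos : 0 < k := i0.pos
  have hlpos : 0 < l := j0.pos
  have hkn' : k ≤ n := by omega
  have hln' : l ≤ n := by omega
  set r : Fin k → Fin n := fun i => ⟨cm k n (i0 : ℕ) (p : ℕ) (i : ℕ), cm_lt hkn' p.isLt i.isLt⟩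
    with hrdef
  set c : Fin l → Fin n := fun j => ⟨cm l n (j0 : ℕ) (q : ℕ) (j : ℕ), cm_lt hln' q.isLt j.isLt⟩
    with hcdef
  have hr : StrictMono r := by
    intro a b hab
    show (r a : ℕ) < (r b : ℕ)
    exact cm_mono hkn i0.isLt hp1 hp2 hab b.isLt
  have hc : StrictMono c := by
    intro a b hab
    show (c a : ℕ) < (c b : ℕ)
    exact cm_mono hln j0.isLt hq1 hq2 hab b.isLt
  have hrp : r i0 = p := Fin.ext (cm_self _ _ _ _)
  have hcq : c j0 = q := Fin.ext (cm_self _ _ _ _)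
  refine ⟨r, c, occ_aux P M p q hM i0 j0 hP r c hr hc hrp hcq ?_⟩
  intro i j hij
  by_cases hij0 : i = i0 ∧ j = j0
  · exact Or.inl hij0
  · right
    obtain ⟨hrow, hcol⟩ := hcov i j hij hij0
    rw [hMval]
    exact ⟨cm_corner' i0.isLt i.isLt hrow, cm_corner' j0.isLt j.isLt hcol⟩

lemma strip_card_le (n a : ℕ) :
    (Finset.univ.filter (fun i : Fin n => (i : ℕ) < a ∨ n - a ≤ (i : ℕ))).card ≤ 2 * a := by
  refine le_trans (Finset.card_le_card_of_injOn (t := Finset.range (2 * a))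
    (fun i : Fin n => if (i : ℕ) < a then (i : ℕ) else (i : ℕ) - (n - a) + a) ?_ ?_)
    (by simp)
  · intro i hi
    simp only [Finset.mem_coe, Finset.mem_filter, Finset.mem_univ, true_and] at hi
    simp only [Finset.mem_coe, Finset.mem_range]
    have := i.isLt
    split_ifs <;> omega
  · intro i hi j hj hij
    simp only [Finset.coe_filter, Finset.mem_univ, true_and, Set.mem_setOf_eq] at hi hj
    have hi' := i.isLt
    have hj' := j.isLt
    apply Fin.ext
    simp only at hij
    split_ifs at hij <;> omega

/-- if `P` satisfies the three special-entry properties, then for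
`n > max(2k-2, 2l-2)` the matrix with four `(k-1) × (l-1)` all-ones corner blocks is
semisaturating for `P`; hence `ssat(P,n,n) ≤ (2k-2)(2l-2)`. -/
theorem ssat_bounded_of_properties {k l : ℕ} (hk : 0 < k) (hl : 0 < l)
    (P : Fin k → Fin l → Bool)
    (h1 : ∃ j : Fin l, P ⟨0, hk⟩ j = true ∧ ∀ i : Fin k, P i j = true → i = ⟨0, hk⟩)
    (h1' : ∃ j : Fin l, P ⟨k - 1, by omega⟩ j = true ∧
      ∀ i : Fin k, P i j = true → i = ⟨k - 1, by omega⟩)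
    (h2 : ∃ i : Fin k, P i ⟨0, hl⟩ = true ∧ ∀ j : Fin l, P i j = true → j = ⟨0, hl⟩)
    (h2' : ∃ i : Fin k, P i ⟨l - 1, by omega⟩ = true ∧
      ∀ j : Fin l, P i j = true → j = ⟨l - 1, by omega⟩)
    (h3 : ∃ (i : Fin k) (j : Fin l), P i j = true ∧
      (∀ i' : Fin k, P i' j = true → i' = i) ∧ (∀ j' : Fin l, P i j' = true → j' = j)) :
    ∀ n : ℕ, max (2 * k - 2) (2 * l - 2) < n →
      Semisaturating P (fun (i : Fin n) (j : Fin n) =>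
        decide (((i : ℕ) < k - 1 ∨ n - (k - 1) ≤ (i : ℕ)) ∧
                ((j : ℕ) < l - 1 ∨ n - (l - 1) ≤ (j : ℕ)))) ∧
      ssatF P n n ≤ (2 * k - 2) * (2 * l - 2) := by
  intro n hn
  set M : Fin n → Fin n → Bool := fun (i : Fin n) (j : Fin n) =>
    decide (((i : ℕ) < k - 1 ∨ n - (k - 1) ≤ (i : ℕ)) ∧
            ((j : ℕ) < l - 1 ∨ n - (l - 1) ≤ (j : ℕ))) with hMdef
  have hkn : 2 * k - 2 < n := lt_of_le_of_lt (le_max_left _ _) hn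
  have hln : 2 * l - 2 < n := lt_of_le_of_lt (le_max_right _ _) hn
  have hMval : ∀ i j : Fin n, M i j = true ↔
      (((i : ℕ) < k - 1 ∨ n - (k - 1) ≤ (i : ℕ)) ∧
       ((j : ℕ) < l - 1 ∨ n - (l - 1) ≤ (j : ℕ))) := by
    intro i j; simp [hMdef]
  have hsemi : Semisaturating P M := by
    intro p q hpq
    have hpq' : ¬ (((p : ℕ) < k - 1 ∨ n - (k - 1) ≤ (p : ℕ)) ∧
        ((q : ℕ) < l - 1 ∨ n - (l - 1) ≤ (q : ℕ))) := by
      intro h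
      rw [← hMval p q] at h
      rw [hpq] at h
      exact Bool.false_ne_true h
    have hpn := p.isLt
    have hqn := q.isLt
    by_cases hpm : k - 1 ≤ (p : ℕ) ∧ (p : ℕ) < n - (k - 1)
    · by_cases hqm : l - 1 ≤ (q : ℕ) ∧ (q : ℕ) < n - (l - 1)
      · -- Case A : both middle, use h3
        obtain ⟨i0, j0, hP, hui, huj⟩ := h3
        have hi0 := i0.isLt
        have hj0 := j0.isLt
        refine build_occ hkn hln P M hMval p q hpq i0 j0 hP (by omega) (by omega)
          (by omega) (by omega) ?_
        intro i j hij hne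
        constructor
        · left; intro hval
          apply hne
          have hi : i = i0 := Fin.ext hval
          subst hi
          exact ⟨rfl, huj j hij⟩
        · left; intro hval
          apply hne
          have hj : j = j0 := Fin.ext hval
          subst hj
          exact ⟨hui i hij, rfl⟩
      · have hq' : (q : ℕ) < l - 1 ∨ n - (l - 1) ≤ (q : ℕ) := by omega
        rcases hq' with hq | hq
        · -- Case B : p middle, q in left strip, use h2
          obtain ⟨i0, hP, hu⟩ := h2
          have hi0 := i0.isLt
          refine build_occ hkn hln P M hMval p q hpq i0 ⟨0, hl⟩ hP (by omega) (by omega)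
            (by simp) (by simp; omega) ?_
          intro i j hij hne
          refine ⟨?_, Or.inr (Or.inl hq)⟩
          left; intro hval
          apply hne
          have hi : i = i0 := Fin.ext hval
          subst hi
          exact ⟨rfl, hu j hij⟩
        · -- Case B' : p middle, q in right strip, use h2'
          obtain ⟨i0, hP, hu⟩ := h2'
          have hi0 := i0.isLt
          refine build_occ hkn hln P M hMval p q hpq i0 ⟨l - 1, by omega⟩ hP (by omega)
            (by omega) (by simp; omega) (by simp; omega) ?_
          intro i j hij hne
          refine ⟨?_, Or.inr (Or.inr hq)⟩
          left; intro hval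
          apply hne
          have hi : i = i0 := Fin.ext hval
          subst hi
          exact ⟨rfl, hu j hij⟩
    · have hqm : l - 1 ≤ (q : ℕ) ∧ (q : ℕ) < n - (l - 1) := by omega
      have hp' : (p : ℕ) < k - 1 ∨ n - (k - 1) ≤ (p : ℕ) := by omega
      rcases hp' with hp | hp
      · -- Case C : q middle, p in top strip, use h1
        obtain ⟨j0, hP, hu⟩ := h1
        have hj0 := j0.isLt
        refine build_occ hkn hln P M hMval p q hpq ⟨0, hk⟩ j0 hP (by simp)
          (by simp; omega) (by omega) (by omega) ?_
        intro i j hij hne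
        refine ⟨Or.inr (Or.inl hp), ?_⟩
        left; intro hval
        apply hne
        have hj : j = j0 := Fin.ext hval
        subst hj
        exact ⟨hu i hij, rfl⟩
      · -- Case C' : q middle, p in bottom strip, use h1'
        obtain ⟨j0, hP, hu⟩ := h1'
        have hj0 := j0.isLt
        refine build_occ hkn hln P M hMval p q hpq ⟨k - 1, by omega⟩ j0 hP
          (by simp; omega) (by simp; omega) (by omega) (by omega) ?_
        intro i j hij hne
        refine ⟨Or.inr (Or.inr hp), ?_⟩
        left; intro hval
        apply hne
        have hj : j = j0 := Fin.ext hval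
        subst hj
        exact ⟨hu i hij, rfl⟩
  refine ⟨hsemi, ?_⟩
  have hw : weight M ≤ (2 * k - 2) * (2 * l - 2) := by
    have hsub : Finset.univ.filter (fun x : Fin n × Fin n => M x.1 x.2 = true) ⊆
        (Finset.univ.filter (fun i : Fin n => (i : ℕ) < k - 1 ∨ n - (k - 1) ≤ (i : ℕ))) ×ˢ
        (Finset.univ.filter (fun j : Fin n => (j : ℕ) < l - 1 ∨ n - (l - 1) ≤ (j : ℕ))) := by
      intro x hx
      simp only [Finset.mem_filter, Finset.mem_univ, true_and] at hx
      rw [hMval] at hx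
      simp only [Finset.mem_product, Finset.mem_filter, Finset.mem_univ, true_and]
      exact hx
    calc weight M ≤ _ := Finset.card_le_card hsub
      _ = _ := Finset.card_product _ _
      _ ≤ (2 * (k - 1)) * (2 * (l - 1)) :=
          Nat.mul_le_mul (strip_card_le n (k - 1)) (strip_card_le n (l - 1))
      _ = (2 * k - 2) * (2 * l - 2) := by
          congr 1 <;> omega
  calc ssatF P n n ≤ weight M := Nat.sInf_le ⟨M, hsemi, rfl⟩
    _ ≤ (2 * k - 2) * (2 * l - 2) := hw
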